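/- Let G be a finite group with |G| > d, U an irreducible unitary representation on ℂ^d, and E positive semidefinite. Then E ≤ (1/(|G|/d − 1)) Σ_{g ≠ 1} U_g E U_g†. -/

import Mathlib

open Matrix BigOperators ComplexOrder

lemma my_smul_posSemidef {d : ℕ} {r : ℝ} (hr : 0 ≤ r) {M : Matrix (Fin d) (Fin d) ℂ}
    (hM : M.PosSemidef) : ((r : ℂ) • M).PosSemidef := by
  refine Matrix.PosSemidef.of_dotProduct_mulVec_nonneg ?_ ?_
  · unfold Matrix.IsHermitian
    rw [conjTranspose_smul]
    rw [hM.1.eq]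
    simp [Complex.star_def]
  · intro x
    have h := hM.dotProduct_mulVec_nonneg x
    rw [Complex.nonneg_iff] at h
    have hqe : star x ⬝ᵥ M *ᵥ x = (((star x ⬝ᵥ M *ᵥ x).re : ℝ) : ℂ) := by
      apply Complex.ext <;> simp [← h.2]
    rw [smul_mulVec, dotProduct_smul, smul_eq_mul, hqe, ← Complex.ofReal_mul,
      Complex.zero_le_real]
    exact mul_nonneg hr h.1

lemma my_trace_smul_one_sub {d : ℕ} {E : Matrix (Fin d) (Fin d) ℂ} (hE : E.PosSemidef) :
    (E.trace • (1 : Matrix (Fin d) (Fin d) ℂ) - E).PosSemidef := by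
  have hH := hE.1
  set V : Matrix (Fin d) (Fin d) ℂ := (hH.eigenvectorUnitary : Matrix (Fin d) (Fin d) ℂ) with hV
  have hVV : star V * V = 1 := Unitary.coe_star_mul_self hH.eigenvectorUnitary
  have htr : E.trace = ((∑ i, hH.eigenvalues i : ℝ) : ℂ) := by
    conv_lhs => rw [hH.spectral_theorem, Unitary.conjStarAlgAut_apply]
    rw [Matrix.trace_mul_cycle, hVV, Matrix.one_mul, trace_diagonal]
    push_cast
    rfl
  have key : E.trace • (1 : Matrix (Fin d) (Fin d) ℂ) - E =
      V * diagonal (fun i => (((∑ j, hH.eigenvalues j) - hH.eigenvalues i : ℝ) : ℂ)) * star V := by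
    have hdiag : diagonal (fun i : Fin d => (((∑ j, hH.eigenvalues j) - hH.eigenvalues i : ℝ) : ℂ))
        = E.trace • (1 : Matrix (Fin d) (Fin d) ℂ)
          - diagonal (RCLike.ofReal ∘ hH.eigenvalues) := by
      rw [htr]
      ext i j
      rcases eq_or_ne i j with rfl | hij
      · simp only [Matrix.diagonal_apply_eq, Matrix.sub_apply, Matrix.smul_apply,
          Matrix.one_apply_eq, Function.comp_apply, smul_eq_mul, mul_one]
        push_cast [RCLike.ofReal_alg]
        norm_num
      · simp [Matrix.diagonal_apply_ne _ hij, Matrix.one_apply_ne hij]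
    rw [hdiag, Matrix.mul_sub, Matrix.sub_mul]
    congr 1
    · rw [Matrix.mul_smul, Matrix.smul_mul, Matrix.mul_one]
      congr 1
      exact ((Matrix.mem_unitaryGroup_iff).mp hH.eigenvectorUnitary.2).symm
    · conv_lhs => rw [hH.spectral_theorem, Unitary.conjStarAlgAut_apply]
  rw [key, Matrix.star_eq_conjTranspose]
  apply Matrix.PosSemidef.mul_mul_conjTranspose_same
  rw [posSemidef_diagonal_iff]
  intro i
  rw [Complex.zero_le_real, sub_nonneg]
  exact Finset.single_le_sum (fun j _ => hE.eigenvalues_nonneg j) (Finset.mem_univ i)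


/-- Key inequality excluding the identity element: for an irreducible unitary representation
`U` of a finite group `G` on `ℂ^d` with `|G| > d`, and any positive semidefinite `E`,
`E ≤ (1/(|G|/d − 1)) ∑_{g ≠ 1} U g * E * (U g)ᴴ` in the Loewner order. -/
theorem key_inequality_irreducible_nonidentity {G : Type*} [Group G] [Fintype G] [DecidableEq G] {d : ℕ}
    (hd : 0 < d) (hGd : d < Fintype.card G)
    (U : G →* Matrix.unitaryGroup (Fin d) ℂ)
    (hirr : ∀ A : Matrix (Fin d) (Fin d) ℂ,
      (∀ g, (U g : Matrix (Fin d) (Fin d) ℂ) * A = A * (U g : Matrix (Fin d) (Fin d) ℂ)) →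
      ∃ z : ℂ, A = z • (1 : Matrix (Fin d) (Fin d) ℂ))
    (E : Matrix (Fin d) (Fin d) ℂ) (hE : E.PosSemidef) :
    ((1 / ((Fintype.card G : ℂ) / (d : ℂ) - 1)) •
        ∑ g ∈ ({1}ᶜ : Finset G),
          (U g : Matrix (Fin d) (Fin d) ℂ) * E * ((U g : Matrix (Fin d) (Fin d) ℂ))ᴴ
      - E).PosSemidef := by
  set N := Fintype.card G with hN
  set S : Matrix (Fin d) (Fin d) ℂ :=
    ∑ g : G, (U g : Matrix (Fin d) (Fin d) ℂ) * E * ((U g : Matrix (Fin d) (Fin d) ℂ))ᴴ with hS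
  -- commutation
  have hcomm : ∀ h : G, (U h : Matrix (Fin d) (Fin d) ℂ) * S
      = S * (U h : Matrix (Fin d) (Fin d) ℂ) := by
    intro h
    rw [hS, Finset.mul_sum, Finset.sum_mul]
    rw [← Equiv.sum_comp (Equiv.mulLeft h)
      (fun g => (U g : Matrix (Fin d) (Fin d) ℂ) * E * ((U g : Matrix (Fin d) (Fin d) ℂ))ᴴ
        * (U h : Matrix (Fin d) (Fin d) ℂ))]
    apply Finset.sum_congr rfl
    intro g _
    have hmul : (U (h * g) : Matrix (Fin d) (Fin d) ℂ)
        = (U h : Matrix (Fin d) (Fin d) ℂ) * (U g : Matrix (Fin d) (Fin d) ℂ) := by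
      rw [_root_.map_mul]; rfl
    have hUh : ((U h : Matrix (Fin d) (Fin d) ℂ))ᴴ * (U h : Matrix (Fin d) (Fin d) ℂ) = 1 := by
      rw [← Matrix.star_eq_conjTranspose]
      exact (Matrix.mem_unitaryGroup_iff').mp (U h).2
    simp only [Equiv.coe_mulLeft, hmul, conjTranspose_mul, Matrix.mul_assoc, hUh,
      Matrix.mul_one]
  obtain ⟨z, hz⟩ := hirr S hcomm
  -- trace computation
  have htrS : S.trace = (N : ℂ) * E.trace := by
    rw [hS, trace_sum]
    rw [Finset.sum_congr rfl (fun g _ => ?_), Finset.sum_const, Finset.card_univ, ← hN,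
      nsmul_eq_mul]
    have hUg : ((U g : Matrix (Fin d) (Fin d) ℂ))ᴴ * (U g : Matrix (Fin d) (Fin d) ℂ) = 1 := by
      rw [← Matrix.star_eq_conjTranspose]
      exact (Matrix.mem_unitaryGroup_iff').mp (U g).2
    rw [Matrix.trace_mul_cycle, hUg, Matrix.one_mul]
  have hzd : z * (d : ℂ) = (N : ℂ) * E.trace := by
    have : S.trace = z * (d : ℂ) := by
      rw [hz, trace_smul, trace_one, smul_eq_mul]
      simp
    rw [← this, htrS]
  -- sum over non-identity elements
  have hsum : (∑ g ∈ ({1}ᶜ : Finset G),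
      (U g : Matrix (Fin d) (Fin d) ℂ) * E * ((U g : Matrix (Fin d) (Fin d) ℂ))ᴴ) = S - E := by
    have h1 := Finset.sum_compl_add_sum ({1} : Finset G)
      (fun g => (U g : Matrix (Fin d) (Fin d) ℂ) * E * ((U g : Matrix (Fin d) (Fin d) ℂ))ᴴ)
    rw [Finset.sum_singleton] at h1
    have hU1 : (U 1 : Matrix (Fin d) (Fin d) ℂ) = 1 := by rw [_root_.map_one]; rfl
    rw [hU1, Matrix.one_mul, conjTranspose_one, Matrix.mul_one] at h1
    exact eq_sub_of_add_eq h1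
  -- scalar bookkeeping
  have hdR : (0 : ℝ) < (d : ℝ) := by exact_mod_cast hd
  have haR : (1 : ℝ) < (N : ℝ) / (d : ℝ) := by
    rw [lt_div_iff₀ hdR]
    simpa using (by exact_mod_cast hGd : (d : ℝ) < (N : ℝ))
  set rr : ℝ := ((N : ℝ) / (d : ℝ)) / ((N : ℝ) / (d : ℝ) - 1) with hrr
  have hrr0 : 0 ≤ rr := by
    apply div_nonneg (by linarith) (by linarith)
  have hcast : ((N : ℂ) / (d : ℂ) - 1) = (( (N : ℝ) / (d : ℝ) - 1 : ℝ) : ℂ) := by push_cast; ring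
  have hc0 : ((N : ℂ) / (d : ℂ) - 1) ≠ 0 := by
    rw [hcast]
    exact_mod_cast (by linarith : ((N : ℝ) / (d : ℝ) - 1 : ℝ) ≠ 0)
  have hd0 : (d : ℂ) ≠ 0 := by exact_mod_cast hd.ne'
  -- the key matrix identity
  have hcR : ((N : ℝ) / (d : ℝ) - 1 : ℝ) ≠ 0 := by linarith
  have hdR0 : ((d : ℝ)) ≠ 0 := hdR.ne'
  have hNd : (N : ℂ) - (d : ℂ) ≠ 0 := by
    have hdN : (d : ℝ) < (N : ℝ) := by exact_mod_cast hGd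
    have : ((N : ℝ) - (d : ℝ) : ℝ) ≠ 0 := by linarith
    exact_mod_cast this
  have e1 : 1 / ((N : ℂ) / (d : ℂ) - 1) * z = ((rr : ℝ) : ℂ) * E.trace := by
    rw [hrr, hcast]
    push_cast
    field_simp [hNd]
    linear_combination hzd
  have e2 : (1 / ((N : ℂ) / (d : ℂ) - 1)) • E + E = ((rr : ℝ) : ℂ) • E := by
    nth_rewrite 2 [← one_smul ℂ E]
    rw [← add_smul]
    congr 1
    rw [hrr, hcast]
    push_cast
    field_simp [hNd]
    ring
  have hmain : (1 / ((N : ℂ) / (d : ℂ) - 1)) • (S - E) - E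
      = ((rr : ℝ) : ℂ) • (E.trace • (1 : Matrix (Fin d) (Fin d) ℂ) - E) := by
    rw [hz, smul_sub, smul_smul, e1, sub_sub, e2, smul_sub, smul_smul]
  rw [hsum, hmain]
  exact my_smul_posSemidef hrr0 (my_trace_smul_one_sub hE)
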